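/- In the Cox ring T = k[x_0,x_1,x_2,y_0,y_1,y_2,y_3] of P^2 × P^3 (deg x_i = (1,0), deg y_j = (0,1)), the saturated bilex ideals I = (x_0, y_0, y_1^2, x_1 y_1, x_1 y_2^3) and J = (y_0, x_0 y_1, x_0 y_2, x_1 y_1, x_1 y_2, y_1^3, y_1^2 y_2) satisfy H_I(t_1,t_2) = H_J(t_1,t_2) for all (t_1,t_2) ∈ {(1,3),(2,3),(1,4),(2,4)}, but H_I(3,3) = 16 ≠ 17 = H_J(3,3); in particular I and J have distinct Hilbert polynomials, namely P_I(t_1,t_2) = 3t_1 + 2t_2 + 1 and P_J(t_1,t_2) = t_1^2/2 + 3t_1/2 + 2t_2 + 2. -/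

import Mathlib

open MvPolynomial

namespace Gotzmann

/-- Variable index set for the Cox ring of `P^{n 0} × ... × P^{n (s-1)}`:
the variable `x_{i,j}` is `⟨i, j⟩`. -/
abbrev PPVar (s : ℕ) (n : Fin s → ℕ) : Type := Σ i : Fin s, Fin (n i + 1)

/-- The multidegree of the variable `x_{i,j}` is the standard basis vector `e_i ∈ ℤ^s` (here
realised in `ℕ^s`). -/
def ppw (s : ℕ) (n : Fin s → ℕ) : PPVar s n → (Fin s → ℕ) :=
  fun v => Pi.single v.1 1

/-- Weighted degree of an exponent vector. -/
def wdeg {σ M : Type*} [AddCommMonoid M] (w : σ → M) (u : σ →₀ ℕ) : M :=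
  u.sum fun v e => e • w v

/-- Multigraded Hilbert function of `S/I` in degree `b`: the dimension of the image of the
degree-`b` part of `S` in `S/I`. -/
noncomputable def hilb (k : Type*) [Field k] {σ M : Type*} [AddCommMonoid M]
    (w : σ → M) (I : Ideal (MvPolynomial σ k)) (b : M) : ℕ :=
  Module.finrank k ((weightedHomogeneousSubmodule k w b).map
    (Ideal.Quotient.mkₐ k I).toLinearMap)

/-- An ideal homogeneous with respect to the grading by `w`. -/
def IsHomog {k : Type*} [Field k] {σ M : Type*} [AddCommMonoid M]
    (w : σ → M) (I : Ideal (MvPolynomial σ k)) : Prop :=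
  ∃ G : Set (MvPolynomial σ k),
    (∀ f ∈ G, ∃ d : M, f.IsWeightedHomogeneous w d) ∧ I = Ideal.span G

/-- A monomial ideal. -/
def IsMonomialIdeal {k : Type*} [Field k] {σ : Type*} (I : Ideal (MvPolynomial σ k)) : Prop :=
  ∃ A : Set (σ →₀ ℕ), I = Ideal.span ((fun u => (monomial u (1 : k))) '' A)

/-- Generated in degrees componentwise at most `a`. -/
def GenInDegLE {k : Type*} [Field k] {σ : Type*} {s : ℕ}
    (w : σ → (Fin s → ℕ)) (I : Ideal (MvPolynomial σ k)) (a : Fin s → ℕ) : Prop :=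
  ∃ G : Set (MvPolynomial σ k), I = Ideal.span G ∧
    ∀ f ∈ G, ∃ d : Fin s → ℕ, f.IsWeightedHomogeneous w d ∧ ∀ i, d i ≤ a i

/-- Generated in degrees at most `a` for the standard grading. -/
def GenInDegLE1 {k : Type*} [Field k] {σ : Type*}
    (I : Ideal (MvPolynomial σ k)) (a : ℕ) : Prop :=
  ∃ G : Set (MvPolynomial σ k), I = Ideal.span G ∧
    ∀ f ∈ G, ∃ d : ℕ, f.IsWeightedHomogeneous (fun _ : σ => (1 : ℕ)) d ∧ d ≤ a

/-- `P` is the (multigraded) Hilbert polynomial of `I`: it agrees with the Hilbert function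
for all multidegrees sufficiently deep in `ℕ^s`. -/
def IsHilbPoly (k : Type*) [Field k] {σ : Type*} {s : ℕ}
    (w : σ → (Fin s → ℕ)) (I : Ideal (MvPolynomial σ k))
    (P : MvPolynomial (Fin s) ℚ) : Prop :=
  ∃ N : ℕ, ∀ b : Fin s → ℕ, (∀ i, N ≤ b i) →
    eval (fun i => (b i : ℚ)) P = (hilb k w I b : ℚ)

/-- `P` is the Hilbert polynomial of the standard-graded ideal `I`. -/
def IsHilbPoly1 (k : Type*) [Field k] {σ : Type*}
    (I : Ideal (MvPolynomial σ k)) (P : Polynomial ℚ) : Prop :=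
  ∃ N : ℕ, ∀ b : ℕ, N ≤ b →
    P.eval (b : ℚ) = (hilb k (fun _ : σ => (1 : ℕ)) I b : ℚ)

/-- Hilbert polynomial for a `ℤ^s`-graded ring, agreement deep in `ℕ^s ⊆ ℤ^s`. -/
def IsHilbPolyZ (k : Type*) [Field k] {σ : Type*} {s : ℕ}
    (w : σ → (Fin s → ℤ)) (I : Ideal (MvPolynomial σ k))
    (P : MvPolynomial (Fin s) ℚ) : Prop :=
  ∃ N : ℕ, ∀ b : Fin s → ℕ, (∀ i, N ≤ b i) →
    eval (fun i => (b i : ℚ)) P = (hilb k w I (fun i => (b i : ℤ)) : ℚ)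

/-- A strongly multistable (monomial) ideal. -/
def StronglyMultistable {k : Type*} [Field k] {s : ℕ} {n : Fin s → ℕ}
    (I : Ideal (MvPolynomial (PPVar s n) k)) : Prop :=
  IsMonomialIdeal I ∧
    ∀ u : PPVar s n →₀ ℕ, (monomial u (1 : k)) ∈ I →
      ∀ (i : Fin s) (j j' : Fin (n i + 1)), j' < j → u ⟨i, j⟩ ≠ 0 →
        (monomial (u - Finsupp.single ⟨i, j⟩ 1 + Finsupp.single ⟨i, j'⟩ 1) (1 : k)) ∈ I

/-- A strongly multistable set of exponent vectors. -/
def StronglyMultistableSet {s : ℕ} {n : Fin s → ℕ} (M : Set (PPVar s n →₀ ℕ)) : Prop :=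
  ∀ u ∈ M, ∀ (i : Fin s) (j j' : Fin (n i + 1)), j' < j → u ⟨i, j⟩ ≠ 0 →
    u - Finsupp.single ⟨i, j⟩ 1 + Finsupp.single ⟨i, j'⟩ 1 ∈ M

/-- The part of an exponent vector supported on block `i`. -/
noncomputable def blockPart {s : ℕ} {n : Fin s → ℕ} (i : Fin s) (u : PPVar s n →₀ ℕ) :
    PPVar s n →₀ ℕ := u.filter fun v => v.1 = i

/-- The part of an exponent vector supported off block `i`. -/
noncomputable def offBlock {s : ℕ} {n : Fin s → ℕ} (i : Fin s) (u : PPVar s n →₀ ℕ) :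
    PPVar s n →₀ ℕ := u.filter fun v => v.1 ≠ i

/-- Exponent vectors supported on block `i` of total degree `d`
(monomials of degree `d·e_i`). -/
def blockMon {s : ℕ} {n : Fin s → ℕ} (i : Fin s) (d : ℕ) : Set (PPVar s n →₀ ℕ) :=
  {p | (∀ v ∈ p.support, v.1 = i) ∧ p.sum (fun _ e => e) = d}

/-- `blockLt i u v` : the block-`i` monomial of `v` is strictly larger than that of `u` in the
lexicographic order with `x_{i,0} ≻ x_{i,1} ≻ ⋯`. -/
def blockLt {s : ℕ} {n : Fin s → ℕ} (i : Fin s) (u v : PPVar s n →₀ ℕ) : Prop :=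
  Pi.Lex (· < ·) (fun {_} => (· < ·)) (fun j => u ⟨i, j⟩) (fun j => v ⟨i, j⟩)

/-- `M` is an `x_i`-lex set: replacing the block-`i` part of a member by any lexicographically
larger monomial of the same degree stays in `M`. -/
def IsXiLex {s : ℕ} {n : Fin s → ℕ} (i : Fin s) (M : Set (PPVar s n →₀ ℕ)) : Prop :=
  ∀ u ∈ M, ∀ p' : PPVar s n →₀ ℕ,
    (∀ v ∈ p'.support, v.1 = i) →
    p'.sum (fun _ e => e) = (blockPart i u).sum (fun _ e => e) →
    blockLt i (blockPart i u) p' →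
    offBlock i u + p' ∈ M

/-- The initial lexsegment of size `c` among block-`i` monomials of degree `d`. -/
noncomputable def lexSeg {s : ℕ} {n : Fin s → ℕ} (i : Fin s) (d c : ℕ) :
    Set (PPVar s n →₀ ℕ) :=
  {p ∈ blockMon i d | (blockMon (n := n) i d ∩ {p' | blockLt i p p'}).ncard < c}

/-- The operation `M ↦ M^{x_i lex}`: in each fibre over a fixed off-block-`i` part, replace the
set of block-`i` parts by the initial lexsegment of the same cardinality. -/
noncomputable def xiLexify {s : ℕ} {n : Fin s → ℕ} (i : Fin s)
    (M : Set (PPVar s n →₀ ℕ)) : Set (PPVar s n →₀ ℕ) :=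
  {w | ∃ u ∈ M, offBlock i w = offBlock i u ∧
        blockPart i w ∈ lexSeg i ((blockPart i u).sum fun _ e => e)
          ({p | p ∈ blockMon i ((blockPart i u).sum fun _ e => e) ∧
              offBlock i u + p ∈ M}).ncard}

/-- Successively apply `M ↦ M^{x_i lex}` for the first `t` blocks. -/
noncomputable def lexifyUpTo {s : ℕ} {n : Fin s → ℕ} (M : Set (PPVar s n →₀ ℕ)) :
    ℕ → Set (PPVar s n →₀ ℕ)
  | 0 => M
  | t + 1 => if h : t < s then xiLexify ⟨t, h⟩ (lexifyUpTo M t) else lexifyUpTo M t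

/-- `M^{multilex} = M^{x_1 lex ⋯ x_s lex}`. -/
noncomputable def multilexify {s : ℕ} {n : Fin s → ℕ} (M : Set (PPVar s n →₀ ℕ)) :
    Set (PPVar s n →₀ ℕ) := lexifyUpTo M s

/-- The exponent vectors of the monomials of `I` of multidegree `a`. -/
def monomialsOf {k : Type*} [Field k] {s : ℕ} {n : Fin s → ℕ}
    (I : Ideal (MvPolynomial (PPVar s n) k)) (a : Fin s → ℕ) : Set (PPVar s n →₀ ℕ) :=
  {u | wdeg (ppw s n) u = a ∧ (monomial u (1 : k)) ∈ I}

/-- A multilex (monomial) ideal. -/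
def IsMultilexIdeal {k : Type*} [Field k] {s : ℕ} {n : Fin s → ℕ}
    (I : Ideal (MvPolynomial (PPVar s n) k)) : Prop :=
  IsMonomialIdeal I ∧ ∀ (a : Fin s → ℕ) (i : Fin s), IsXiLex i (monomialsOf I a)

/-- `κ` encodes the `d`-th Macaulay representation of `α`:
`α = C(κ(d),d) + ⋯ + C(κ(1),1)` with `κ(d) > ⋯ > κ(1) ≥ 0`; here `κ j` is the paper's
`κ(j+1)`. -/
def IsMacaulayRep (d α : ℕ) (κ : Fin d → ℕ) : Prop :=
  StrictMono κ ∧ α = ∑ j : Fin d, Nat.choose (κ j) ((j : ℕ) + 1)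

/-- The Macaulay bound `α^{⟨d⟩}`. -/
noncomputable def macaulayBound (d α : ℕ) : ℕ :=
  letI := Classical.propDecidable (∃ κ : Fin d → ℕ, IsMacaulayRep d α κ)
  if h : ∃ κ : Fin d → ℕ, IsMacaulayRep d α κ
  then ∑ j : Fin d, Nat.choose (h.choose j + 1) ((j : ℕ) + 2)
  else 0

/-- Maximal growth of a Hilbert function in one direction: with
`H u = C(nv+u, nv)·q(u) + r(u)` the Euclidean division, `H (u+1) = C(nv+u+1,nv)·q(u) + r(u)^⟨u⟩`. -/
def growthStep (nv : ℕ) (H : ℕ → ℕ) (u : ℕ) : Prop :=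
  H (u + 1) =
    (nv + u + 1).choose nv * (H u / (nv + u).choose nv)
      + macaulayBound u (H u % (nv + u).choose nv)

/-- Hilbert polynomial for a `ℤ^s`-graded Cox ring, with agreement sufficiently far into the nef
cone, parameterised by nef classes `c i`. -/
def IsHilbPolyNef (k : Type*) [Field k] {σ : Type*} {s : ℕ}
    (w : σ → (Fin s → ℤ)) (c : Fin s → (Fin s → ℤ))
    (I : Ideal (MvPolynomial σ k)) (P : MvPolynomial (Fin s) ℚ) : Prop :=
  ∃ N : ℕ, ∀ b : Fin s → ℕ, (∀ i, N ≤ b i) →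
    eval (fun j => ((∑ i, (b i : ℤ) * c i j : ℤ) : ℚ)) P
      = (hilb k w I (fun j => ∑ i, (b i : ℤ) * c i j) : ℚ)

/-- The `ℤ²`-grading of the Cox ring of Kleinschmidt's Picard-rank-2 toric variety `X_d(a)`:
`deg z_i = (-a_i, 1)` for `1 ≤ i ≤ s`, `deg z_{s+1} = (0,1)`, `deg z_i = (1,0)` otherwise
(indices here are `0`-based). -/
def kw (d s : ℕ) (a : Fin s → ℕ) : Fin (d + 2) → (Fin 2 → ℤ) :=
  fun i => if h : (i : ℕ) < s then ![-(a ⟨i, h⟩ : ℤ), 1]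
    else if (i : ℕ) = s then ![0, 1] else ![1, 0]

/-- The bigrading of `T = k[x₀,x₁,x₂,y₀,y₁,y₂,y₃] = Cox(P² × P³)`:
`deg xᵢ = (1,0)`, `deg yⱼ = (0,1)`. -/
def w17 : Fin 3 ⊕ Fin 4 → (Fin 2 → ℕ) :=
  Sum.elim (fun _ => ![1, 0]) (fun _ => ![0, 1])

section Aux
open Finset

set_option maxHeartbeats 1000000 in
set_option synthInstance.maxHeartbeats 100000 in

lemma hilb_aux {k : Type*} [Field k] {σ M : Type*} [AddCommMonoid M]
    (w : σ → M) (S : Set (σ →₀ ℕ)) (b : M) (F : Finset (σ →₀ ℕ))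
    (hF : ∀ u : σ →₀ ℕ, u ∈ F ↔ (Finsupp.weight w u = b ∧ ¬ ∃ m ∈ S, m ≤ u)) :
    Module.finrank k ((weightedHomogeneousSubmodule k w b).map
      (Ideal.Quotient.mkₐ k (Ideal.span ((fun u => monomial u (1:k)) '' S))).toLinearMap)
      = F.card := by
  classical
  set I : Ideal (MvPolynomial σ k) := Ideal.span ((fun u => monomial u (1:k)) '' S) with hI
  set Q := (Ideal.Quotient.mkₐ k I).toLinearMap with hQ
  have hmem : ∀ u : σ →₀ ℕ, monomial u (1:k) ∈ I ↔ ∃ m ∈ S, m ≤ u := by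
    intro u
    rw [hI, mem_ideal_span_monomial_image]
    constructor
    · intro h; exact h u (by simp [mem_support_iff])
    · intro h d hd
      rw [mem_support_iff, coeff_monomial] at hd
      rcases eq_or_ne u d with rfl | hne
      · exact h
      · simp [if_neg hne] at hd
  have hspan : weightedHomogeneousSubmodule k w b
      = Submodule.span k ((fun u => monomial u (1:k)) '' {u | Finsupp.weight w u = b}) := by
    apply le_antisymm
    · intro p hp
      rw [mem_weightedHomogeneousSubmodule] at hp
      rw [p.as_sum]
      refine Submodule.sum_mem _ fun v hv => ?_
      have : monomial v (coeff v p) = (coeff v p) • monomial v (1:k) := by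
        rw [smul_monomial, smul_eq_mul, mul_one]
      rw [this]
      refine Submodule.smul_mem _ _ (Submodule.subset_span ?_)
      exact ⟨v, hp (mem_support_iff.mp hv), rfl⟩
    · rw [Submodule.span_le]
      rintro _ ⟨u, hu, rfl⟩
      exact isWeightedHomogeneous_monomial w u 1 hu
  rw [hspan, Submodule.map_span]
  have hrange : Submodule.span k (Q '' ((fun u => monomial u (1:k)) '' {u | Finsupp.weight w u = b}))
      = Submodule.span k (Set.range fun u : F => Q (monomial (u : σ →₀ ℕ) (1:k))) := by
    apply le_antisymm <;> rw [Submodule.span_le]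
    · rintro _ ⟨_, ⟨u, hu, rfl⟩, rfl⟩
      by_cases hdiv : ∃ m ∈ S, m ≤ u
      · have : (monomial u (1:k)) ∈ I := (hmem u).mpr hdiv
        have h0 : Q (monomial u (1:k)) = 0 := Ideal.Quotient.eq_zero_iff_mem.mpr this
        rw [h0]; exact Submodule.zero_mem _
      · have huF : u ∈ F := (hF u).mpr ⟨hu, hdiv⟩
        exact Submodule.subset_span ⟨⟨u, huF⟩, rfl⟩
    · rintro _ ⟨⟨u, huF⟩, rfl⟩
      exact Submodule.subset_span ⟨monomial u 1, ⟨u, ((hF u).mp huF).1, rfl⟩, rfl⟩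
  rw [hrange]
  have hli : LinearIndependent k (fun u : F => Q (monomial (u : σ →₀ ℕ) (1:k))) := by
    rw [linearIndependent_iff']
    intro s g hsum i hi
    by_contra hgi
    have hp : (∑ j ∈ s, monomial (j : σ →₀ ℕ) (g j)) ∈ I := by
      have hQ0 : Q (∑ j ∈ s, monomial (j : σ →₀ ℕ) (g j)) = 0 := by
        rw [map_sum, ← hsum]
        refine Finset.sum_congr rfl fun j _ => ?_
        rw [← map_smul, smul_monomial, smul_eq_mul, mul_one]
      exact Ideal.Quotient.eq_zero_iff_mem.mp hQ0
    rw [hI, mem_ideal_span_monomial_image] at hp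
    have hcoeff : coeff (i : σ →₀ ℕ) (∑ j ∈ s, monomial (j : σ →₀ ℕ) (g j)) = g i := by
      rw [coeff_sum]
      rw [Finset.sum_eq_single i]
      · simp [coeff_monomial]
      · intro j _ hji
        rw [coeff_monomial, if_neg]
        exact fun h => hji (Subtype.ext h)
      · intro h; exact absurd hi h
    have hsupp : (i : σ →₀ ℕ) ∈ (∑ j ∈ s, monomial (j : σ →₀ ℕ) (g j)).support := by
      rw [mem_support_iff, hcoeff]; exact hgi
    obtain ⟨m, hm, hle⟩ := hp _ hsupp
    exact ((hF i).mp i.2).2 ⟨m, hm, hle⟩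
  rw [finrank_span_eq_card hli, Fintype.card_coe]

abbrev σ7 := Fin 3 ⊕ Fin 4

noncomputable def pe : (Fin 3 → ℕ) × (Fin 4 → ℕ) ≃ (σ7 →₀ ℕ) :=
  (Equiv.sumArrowEquivProdArrow _ _ ℕ).symm.trans Finsupp.equivFunOnFinite.symm

@[simp] lemma pe_inl (a : Fin 3 → ℕ) (b : Fin 4 → ℕ) (i : Fin 3) :
    pe (a, b) (Sum.inl i) = a i := rfl

@[simp] lemma pe_inr (a : Fin 3 → ℕ) (b : Fin 4 → ℕ) (j : Fin 4) :
    pe (a, b) (Sum.inr j) = b j := rfl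

lemma weight_pe (a : Fin 3 → ℕ) (b : Fin 4 → ℕ) :
    Finsupp.weight w17 (pe (a, b)) = ![a 0 + a 1 + a 2, b 0 + b 1 + b 2 + b 3] := by
  rw [Finsupp.weight_apply, Finsupp.sum_fintype _ _ (by intro i; simp)]
  funext t
  rw [Fintype.sum_sum_type]
  fin_cases t <;>
    simp [w17, Fin.sum_univ_three, Fin.sum_univ_four, Finset.sum_apply]

lemma le_pe (a' a : Fin 3 → ℕ) (b' b : Fin 4 → ℕ) :
    pe (a', b') ≤ pe (a, b) ↔ (∀ i, a' i ≤ a i) ∧ (∀ j, b' j ≤ b j) := by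
  rw [Finsupp.le_def]
  constructor
  · intro h; exact ⟨fun i => h (Sum.inl i), fun j => h (Sum.inr j)⟩
  · rintro ⟨h1, h2⟩ (i | j)
    · exact h1 i
    · exact h2 j

lemma pe_eq_iff (a' a : Fin 3 → ℕ) (b' b : Fin 4 → ℕ) :
    pe (a', b') = pe (a, b) ↔ a' = a ∧ b' = b := by
  rw [pe.apply_eq_iff_eq, Prod.mk.injEq]

lemma forall_fin3 (p : Fin 3 → Prop) : (∀ i, p i) ↔ p 0 ∧ p 1 ∧ p 2 :=
  ⟨fun h => ⟨h 0, h 1, h 2⟩, by rintro ⟨h0, h1, h2⟩ i; fin_cases i <;> assumption⟩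

lemma forall_fin4 (p : Fin 4 → Prop) : (∀ i, p i) ↔ p 0 ∧ p 1 ∧ p 2 ∧ p 3 :=
  ⟨fun h => ⟨h 0, h 1, h 2, h 3⟩, by rintro ⟨h0, h1, h2, h3⟩ i; fin_cases i <;> assumption⟩

lemma vec2_eq (m n t1 t2 : ℕ) : ![m, n] = ![t1, t2] ↔ m = t1 ∧ n = t2 := by
  simp [funext_iff, Fin.forall_fin_two]

lemma single_eq_pe (i : Fin 3) (n : ℕ) :
    (Finsupp.single (Sum.inl i : σ7) n) = pe (Pi.single i n, 0) := by
  ext s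
  rcases s with i' | j' <;> simp [Finsupp.single_apply, Pi.single_apply, eq_comm]

lemma single_eq_pe' (j : Fin 4) (n : ℕ) :
    (Finsupp.single (Sum.inr j : σ7) n) = pe (0, Pi.single j n) := by
  ext s
  rcases s with i' | j' <;> simp [Finsupp.single_apply, Pi.single_apply, eq_comm]

@[simp] lemma pe_add (p q : (Fin 3 → ℕ) × (Fin 4 → ℕ)) : pe (p + q) = pe p + pe q := by
  ext s; rcases s with i | j <;> rcases p with ⟨pa, pb⟩ <;> rcases q with ⟨qa, qb⟩ <;> simp

def SI : Set (σ7 →₀ ℕ) :=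
  {pe (![1,0,0], ![0,0,0,0]), pe (![0,0,0], ![1,0,0,0]), pe (![0,0,0], ![0,2,0,0]),
   pe (![0,1,0], ![0,1,0,0]), pe (![0,1,0], ![0,0,3,0])}

lemma pe_congr {p q : (Fin 3 → ℕ) × (Fin 4 → ℕ)} (h1 : p.1 = q.1) (h2 : p.2 = q.2) :
    pe p = pe q := congrArg pe (Prod.ext h1 h2)

lemma genI {k : Type*} [Field k] :
    ({X (Sum.inl 0), X (Sum.inr 0), X (Sum.inr 1) ^ 2, X (Sum.inl 1) * X (Sum.inr 1),
      X (Sum.inl 1) * X (Sum.inr 2) ^ 3} : Set (MvPolynomial σ7 k))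
      = (fun u => monomial u (1 : k)) '' SI := by
  have h1 : ∀ s : σ7, (X s : MvPolynomial σ7 k) = monomial (Finsupp.single s 1) 1 := fun s => rfl
  have e1 : (X (Sum.inl 0) : MvPolynomial σ7 k) = monomial (pe (![1,0,0], ![0,0,0,0])) 1 := by
    rw [h1, single_eq_pe]
    exact congrArg (fun u => monomial u (1 : k))
      (pe_congr (by funext i; fin_cases i <;> simp) (by funext j; fin_cases j <;> simp))
  have e2 : (X (Sum.inr 0) : MvPolynomial σ7 k) = monomial (pe (![0,0,0], ![1,0,0,0])) 1 := by
    rw [h1, single_eq_pe']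
    exact congrArg (fun u => monomial u (1 : k))
      (pe_congr (by funext i; fin_cases i <;> simp) (by funext j; fin_cases j <;> simp))
  have e3 : (X (Sum.inr 1) ^ 2 : MvPolynomial σ7 k) = monomial (pe (![0,0,0], ![0,2,0,0])) 1 := by
    rw [X_pow_eq_monomial, single_eq_pe']
    exact congrArg (fun u => monomial u (1 : k))
      (pe_congr (by funext i; fin_cases i <;> simp) (by funext j; fin_cases j <;> simp))
  have e4 : (X (Sum.inl 1) * X (Sum.inr 1) : MvPolynomial σ7 k)
      = monomial (pe (![0,1,0], ![0,1,0,0])) 1 := by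
    rw [h1, h1, monomial_mul, mul_one, single_eq_pe, single_eq_pe', ← pe_add]
    exact congrArg (fun u => monomial u (1 : k))
      (pe_congr (by funext i; fin_cases i <;> simp) (by funext j; fin_cases j <;> simp))
  have e5 : (X (Sum.inl 1) * X (Sum.inr 2) ^ 3 : MvPolynomial σ7 k)
      = monomial (pe (![0,1,0], ![0,0,3,0])) 1 := by
    rw [h1, X_pow_eq_monomial, monomial_mul, mul_one, single_eq_pe, single_eq_pe', ← pe_add]
    exact congrArg (fun u => monomial u (1 : k))
      (pe_congr (by funext i; fin_cases i <;> simp) (by funext j; fin_cases j <;> simp))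
  rw [SI, Set.image_insert_eq, Set.image_insert_eq, Set.image_insert_eq, Set.image_insert_eq,
    Set.image_singleton, e1, e2, e3, e4, e5]

lemma divI (a : Fin 3 → ℕ) (b : Fin 4 → ℕ) :
    (∃ m ∈ SI, m ≤ pe (a, b)) ↔
      (1 ≤ a 0 ∨ 1 ≤ b 0 ∨ 2 ≤ b 1 ∨ (1 ≤ a 1 ∧ 1 ≤ b 1) ∨ (1 ≤ a 1 ∧ 3 ≤ b 2)) := by
  simp only [SI, Set.mem_insert_iff, Set.mem_singleton_iff, exists_eq_or_imp, exists_eq_left,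
    le_pe, forall_fin3, forall_fin4]
  simp only [Matrix.cons_val_zero, Matrix.cons_val_one, Matrix.head_cons,
    Matrix.cons_val_two, Matrix.tail_cons, Matrix.cons_val_three, Matrix.head_fin_const]
  omega

def KI (t1 t2 : ℕ) : Finset (ℕ × ℕ × ℕ) :=
  ({0} ×ˢ {0} ×ˢ range (t2 + 1)) ∪ ({0} ×ˢ {1} ×ˢ range t2) ∪ ((Icc 1 t1) ×ˢ {0} ×ˢ range 3)

lemma mem_KI (t1 t2 : ℕ) (p : ℕ × ℕ × ℕ) :
    p ∈ KI t1 t2 ↔ (p.1 = 0 ∧ p.2.1 = 0 ∧ p.2.2 ≤ t2) ∨ (p.1 = 0 ∧ p.2.1 = 1 ∧ p.2.2 < t2)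
      ∨ (1 ≤ p.1 ∧ p.1 ≤ t1 ∧ p.2.1 = 0 ∧ p.2.2 ≤ 2) := by
  obtain ⟨p1, p2, p3⟩ := p
  simp only [KI, Finset.mem_union, Finset.mem_product, Finset.mem_singleton, Finset.mem_range,
    Finset.mem_Icc]
  omega

lemma card_KI (t1 t2 : ℕ) : (KI t1 t2).card = 3 * t1 + 2 * t2 + 1 := by
  rw [KI, card_union_of_disjoint, card_union_of_disjoint]
  · simp [Nat.card_Icc]; ring
  · rw [Finset.disjoint_left]
    rintro ⟨p1, p2, p3⟩ hp hq
    simp only [Finset.mem_union, Finset.mem_product, Finset.mem_singleton, Finset.mem_range,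
      Finset.mem_Icc] at hp hq
    omega
  · rw [Finset.disjoint_left]
    rintro ⟨p1, p2, p3⟩ hp hq
    simp only [Finset.mem_union, Finset.mem_product, Finset.mem_singleton, Finset.mem_range,
      Finset.mem_Icc] at hp hq
    omega

noncomputable def qI (t1 t2 : ℕ) : ℕ × ℕ × ℕ → (σ7 →₀ ℕ) :=
  fun p => pe (![0, p.1, t1 - p.1], ![0, p.2.1, p.2.2, t2 - p.2.1 - p.2.2])

lemma qI_inj (t1 t2 : ℕ) : Function.Injective (qI t1 t2) := by
  intro p q h
  rw [qI, qI, pe_eq_iff] at h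
  obtain ⟨h1, h2⟩ := h
  have a1 := congrFun h1 1
  have b1 := congrFun h2 1
  have b2 := congrFun h2 2
  simp at a1 b1 b2
  exact Prod.ext a1 (Prod.ext b1 b2)

noncomputable def FI (t1 t2 : ℕ) : Finset (σ7 →₀ ℕ) := (KI t1 t2).image (qI t1 t2)

lemma card_FI (t1 t2 : ℕ) : (FI t1 t2).card = 3 * t1 + 2 * t2 + 1 := by
  rw [FI, Finset.card_image_of_injective _ (qI_inj t1 t2), card_KI]

lemma mem_FI (t1 t2 : ℕ) (ht2 : 2 ≤ t2) (u : σ7 →₀ ℕ) :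
    u ∈ FI t1 t2 ↔ (Finsupp.weight w17 u = ![t1, t2] ∧ ¬ ∃ m ∈ SI, m ≤ u) := by
  obtain ⟨⟨a, b⟩, rfl⟩ := pe.surjective u
  rw [weight_pe, vec2_eq, divI]
  simp only [FI, Finset.mem_image]
  constructor
  · rintro ⟨p, hp, heq⟩
    rw [mem_KI] at hp
    rw [qI, pe_eq_iff] at heq
    obtain ⟨ha, hb⟩ := heq
    have a0 := congrFun ha 0
    have a1 := congrFun ha 1
    have a2 := congrFun ha 2
    have b0 := congrFun hb 0
    have b1 := congrFun hb 1
    have b2 := congrFun hb 2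
    have b3 := congrFun hb 3
    simp at a0 a1 a2 b0 b1 b2 b3
    omega
  · rintro ⟨⟨hsa, hsb⟩, hdiv⟩
    push_neg at hdiv
    refine ⟨(a 1, b 1, b 2), ?_, ?_⟩
    · rw [mem_KI]; dsimp only; omega
    · rw [qI, pe_eq_iff]
      constructor
      · funext i; fin_cases i <;> simp <;> omega
      · funext j; fin_cases j <;> simp <;> omega

def SJ : Set (σ7 →₀ ℕ) :=
  {pe (![0,0,0], ![1,0,0,0]), pe (![1,0,0], ![0,1,0,0]), pe (![1,0,0], ![0,0,1,0]),
   pe (![0,1,0], ![0,1,0,0]), pe (![0,1,0], ![0,0,1,0]), pe (![0,0,0], ![0,3,0,0]),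
   pe (![0,0,0], ![0,2,1,0])}

lemma genJ {k : Type*} [Field k] :
    ({X (Sum.inr 0), X (Sum.inl 0) * X (Sum.inr 1), X (Sum.inl 0) * X (Sum.inr 2),
      X (Sum.inl 1) * X (Sum.inr 1), X (Sum.inl 1) * X (Sum.inr 2),
      X (Sum.inr 1) ^ 3, X (Sum.inr 1) ^ 2 * X (Sum.inr 2)} : Set (MvPolynomial σ7 k))
      = (fun u => monomial u (1 : k)) '' SJ := by
  have h1 : ∀ s : σ7, (X s : MvPolynomial σ7 k) = monomial (Finsupp.single s 1) 1 := fun s => rfl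
  have e1 : (X (Sum.inr 0) : MvPolynomial σ7 k) = monomial (pe (![0,0,0], ![1,0,0,0])) 1 := by
    rw [h1, single_eq_pe']
    exact congrArg (fun u => monomial u (1 : k))
      (pe_congr (by funext i; fin_cases i <;> simp) (by funext j; fin_cases j <;> simp))
  have e2 : (X (Sum.inl 0) * X (Sum.inr 1) : MvPolynomial σ7 k)
      = monomial (pe (![1,0,0], ![0,1,0,0])) 1 := by
    rw [h1, h1, monomial_mul, mul_one, single_eq_pe, single_eq_pe', ← pe_add]
    exact congrArg (fun u => monomial u (1 : k))
      (pe_congr (by funext i; fin_cases i <;> simp) (by funext j; fin_cases j <;> simp))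
  have e3 : (X (Sum.inl 0) * X (Sum.inr 2) : MvPolynomial σ7 k)
      = monomial (pe (![1,0,0], ![0,0,1,0])) 1 := by
    rw [h1, h1, monomial_mul, mul_one, single_eq_pe, single_eq_pe', ← pe_add]
    exact congrArg (fun u => monomial u (1 : k))
      (pe_congr (by funext i; fin_cases i <;> simp) (by funext j; fin_cases j <;> simp))
  have e4 : (X (Sum.inl 1) * X (Sum.inr 1) : MvPolynomial σ7 k)
      = monomial (pe (![0,1,0], ![0,1,0,0])) 1 := by
    rw [h1, h1, monomial_mul, mul_one, single_eq_pe, single_eq_pe', ← pe_add]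
    exact congrArg (fun u => monomial u (1 : k))
      (pe_congr (by funext i; fin_cases i <;> simp) (by funext j; fin_cases j <;> simp))
  have e5 : (X (Sum.inl 1) * X (Sum.inr 2) : MvPolynomial σ7 k)
      = monomial (pe (![0,1,0], ![0,0,1,0])) 1 := by
    rw [h1, h1, monomial_mul, mul_one, single_eq_pe, single_eq_pe', ← pe_add]
    exact congrArg (fun u => monomial u (1 : k))
      (pe_congr (by funext i; fin_cases i <;> simp) (by funext j; fin_cases j <;> simp))
  have e6 : (X (Sum.inr 1) ^ 3 : MvPolynomial σ7 k) = monomial (pe (![0,0,0], ![0,3,0,0])) 1 := by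
    rw [X_pow_eq_monomial, single_eq_pe']
    exact congrArg (fun u => monomial u (1 : k))
      (pe_congr (by funext i; fin_cases i <;> simp) (by funext j; fin_cases j <;> simp))
  have e7 : (X (Sum.inr 1) ^ 2 * X (Sum.inr 2) : MvPolynomial σ7 k)
      = monomial (pe (![0,0,0], ![0,2,1,0])) 1 := by
    rw [X_pow_eq_monomial, h1, monomial_mul, mul_one, single_eq_pe', single_eq_pe', ← pe_add]
    exact congrArg (fun u => monomial u (1 : k))
      (pe_congr (by funext i; fin_cases i <;> simp) (by funext j; fin_cases j <;> simp))
  rw [SJ, Set.image_insert_eq, Set.image_insert_eq, Set.image_insert_eq, Set.image_insert_eq,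
    Set.image_insert_eq, Set.image_insert_eq, Set.image_singleton, e1, e2, e3, e4, e5, e6, e7]

lemma divJ (a : Fin 3 → ℕ) (b : Fin 4 → ℕ) :
    (∃ m ∈ SJ, m ≤ pe (a, b)) ↔
      (1 ≤ b 0 ∨ (1 ≤ a 0 ∧ 1 ≤ b 1) ∨ (1 ≤ a 0 ∧ 1 ≤ b 2) ∨ (1 ≤ a 1 ∧ 1 ≤ b 1)
        ∨ (1 ≤ a 1 ∧ 1 ≤ b 2) ∨ 3 ≤ b 1 ∨ (2 ≤ b 1 ∧ 1 ≤ b 2)) := by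
  simp only [SJ, Set.mem_insert_iff, Set.mem_singleton_iff, exists_eq_or_imp, exists_eq_left,
    le_pe, forall_fin3, forall_fin4]
  simp only [Matrix.cons_val_zero, Matrix.cons_val_one, Matrix.head_cons,
    Matrix.cons_val_two, Matrix.tail_cons, Matrix.cons_val_three, Matrix.head_fin_const]
  omega

def TRI (t1 : ℕ) : Finset (ℕ × ℕ) :=
  (range (t1 + 1)).biUnion (fun s => Finset.HasAntidiagonal.antidiagonal s)

lemma mem_TRI (t1 : ℕ) (p : ℕ × ℕ) : p ∈ TRI t1 ↔ p.1 + p.2 ≤ t1 := by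
  simp only [TRI, Finset.mem_biUnion, Finset.mem_range, Finset.HasAntidiagonal.mem_antidiagonal,
    Nat.lt_succ_iff]
  constructor
  · rintro ⟨s, hs, h⟩; omega
  · intro h; exact ⟨p.1 + p.2, h, rfl⟩

lemma card_TRI (t1 : ℕ) : 2 * (TRI t1).card = (t1 + 1) * (t1 + 2) := by
  rw [TRI, Finset.card_biUnion]
  · have : ∀ s ∈ range (t1 + 1), (Finset.HasAntidiagonal.antidiagonal s).card = s + 1 := by
      intro s _; exact Nat.card_antidiagonal s
    rw [Finset.sum_congr rfl this, Finset.sum_add_distrib, Finset.sum_const, Finset.card_range,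
      smul_eq_mul, mul_one]
    have h := Finset.sum_range_id_mul_two (t1 + 1)
    simp only [Nat.add_sub_cancel] at h
    have h2 : (t1 + 1) * (t1 + 2) = (t1 + 1) * t1 + 2 * (t1 + 1) := by ring
    omega
  · intro s _ t _ hst
    rw [Function.onFun, Finset.disjoint_left]
    intro p hp hq
    rw [Finset.HasAntidiagonal.mem_antidiagonal] at hp hq
    exact hst (hp ▸ hq)

def KJ (t1 t2 : ℕ) : Finset (ℕ × ℕ × ℕ × ℕ) :=
  ((TRI t1).image (fun p => (p.1, p.2, 0, 0)) ∪ ({0} ×ˢ {0} ×ˢ {0} ×ˢ Icc 1 t2))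
    ∪ (({0} ×ˢ {0} ×ˢ {1} ×ˢ range t2) ∪ {(0, 0, 2, 0)})

lemma mem_KJ (t1 t2 : ℕ) (p : ℕ × ℕ × ℕ × ℕ) :
    p ∈ KJ t1 t2 ↔ (p.1 + p.2.1 ≤ t1 ∧ p.2.2.1 = 0 ∧ p.2.2.2 = 0)
      ∨ (p.1 = 0 ∧ p.2.1 = 0 ∧ p.2.2.1 = 0 ∧ 1 ≤ p.2.2.2 ∧ p.2.2.2 ≤ t2)
      ∨ (p.1 = 0 ∧ p.2.1 = 0 ∧ p.2.2.1 = 1 ∧ p.2.2.2 < t2)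
      ∨ (p.1 = 0 ∧ p.2.1 = 0 ∧ p.2.2.1 = 2 ∧ p.2.2.2 = 0) := by
  obtain ⟨p1, p2, p3, p4⟩ := p
  simp only [KJ, Finset.mem_union, Finset.mem_product, Finset.mem_singleton, Finset.mem_range,
    Finset.mem_Icc, Finset.mem_image, mem_TRI, Prod.mk.injEq, Prod.ext_iff]
  constructor
  · rintro ((⟨⟨q1, q2⟩, hq, h1, h2, h3, h4⟩ | h) | (h | h))
    · subst h1; subst h2; simp at hq h3 h4; omega
    · omega
    · omega
    · simp_all
  · rintro (⟨h1, h2, h3⟩ | h | h | h)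
    · exact Or.inl (Or.inl ⟨(p1, p2), h1, rfl, rfl, h2.symm, h3.symm⟩)
    · exact Or.inl (Or.inr (by omega))
    · exact Or.inr (Or.inl (by omega))
    · exact Or.inr (Or.inr (by omega))

lemma card_KJ (t1 t2 : ℕ) : 2 * (KJ t1 t2).card = (t1 + 1) * (t1 + 2) + 2 * (2 * t2 + 1) := by
  have hd1 : Disjoint ((TRI t1).image (fun p => (p.1, p.2, 0, 0)))
      ({0} ×ˢ {0} ×ˢ {0} ×ˢ Icc 1 t2 : Finset (ℕ × ℕ × ℕ × ℕ)) := by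
    rw [Finset.disjoint_left]
    rintro ⟨p1, p2, p3, p4⟩ hp hq
    simp only [Finset.mem_image, Prod.mk.injEq, Finset.mem_product, Finset.mem_singleton,
      Finset.mem_Icc] at hp hq
    obtain ⟨q, _, _, _, _, h4⟩ := hp
    omega
  have hd2 : Disjoint ({0} ×ˢ {0} ×ˢ {1} ×ˢ range t2 : Finset (ℕ × ℕ × ℕ × ℕ))
      ({(0, 0, 2, 0)} : Finset (ℕ × ℕ × ℕ × ℕ)) := by
    rw [Finset.disjoint_left]
    rintro ⟨p1, p2, p3, p4⟩ hp hq
    simp only [Finset.mem_product, Finset.mem_singleton, Finset.mem_range, Prod.mk.injEq] at hp hq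
    omega
  have hd3 : Disjoint (((TRI t1).image (fun p => (p.1, p.2, 0, 0)))
        ∪ ({0} ×ˢ {0} ×ˢ {0} ×ˢ Icc 1 t2))
      ((({0} ×ˢ {0} ×ˢ {1} ×ˢ range t2) ∪ {(0, 0, 2, 0)}) : Finset (ℕ × ℕ × ℕ × ℕ)) := by
    rw [Finset.disjoint_left]
    rintro ⟨p1, p2, p3, p4⟩ hp hq
    simp only [Finset.mem_union, Finset.mem_image, Prod.mk.injEq, Finset.mem_product,
      Finset.mem_singleton, Finset.mem_range, mem_TRI, Finset.mem_Icc] at hp hq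
    rcases hp with ⟨q, _, _, _, h3, h4⟩ | hp <;> omega
  have hinj : Set.InjOn (fun p : ℕ × ℕ => (p.1, p.2, 0, 0)) (TRI t1) := by
    rintro ⟨a1, a2⟩ _ ⟨b1, b2⟩ _ h
    simp only [Prod.mk.injEq] at h
    exact Prod.ext h.1 h.2.1
  rw [KJ, card_union_of_disjoint hd3, card_union_of_disjoint hd1, card_union_of_disjoint hd2,
    Finset.card_image_of_injOn hinj]
  simp only [Finset.card_product, Finset.card_singleton, Finset.card_range, Nat.card_Icc,
    one_mul, Nat.mul_add, ← card_TRI t1]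
  ring_nf
  omega

noncomputable def qJ (t1 t2 : ℕ) : ℕ × ℕ × ℕ × ℕ → (σ7 →₀ ℕ) :=
  fun p => pe (![p.1, p.2.1, t1 - p.1 - p.2.1], ![0, p.2.2.1, p.2.2.2, t2 - p.2.2.1 - p.2.2.2])

lemma qJ_inj (t1 t2 : ℕ) : Function.Injective (qJ t1 t2) := by
  intro p q h
  rw [qJ, qJ, pe_eq_iff] at h
  obtain ⟨h1, h2⟩ := h
  have a0 := congrFun h1 0
  have a1 := congrFun h1 1
  have b1 := congrFun h2 1
  have b2 := congrFun h2 2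
  simp at a0 a1 b1 b2
  exact Prod.ext a0 (Prod.ext a1 (Prod.ext b1 b2))

noncomputable def FJ (t1 t2 : ℕ) : Finset (σ7 →₀ ℕ) := (KJ t1 t2).image (qJ t1 t2)

lemma card_FJ (t1 t2 : ℕ) : 2 * (FJ t1 t2).card = (t1 + 1) * (t1 + 2) + 2 * (2 * t2 + 1) := by
  rw [FJ, Finset.card_image_of_injective _ (qJ_inj t1 t2), card_KJ]

lemma mem_FJ (t1 t2 : ℕ) (ht2 : 2 ≤ t2) (u : σ7 →₀ ℕ) :
    u ∈ FJ t1 t2 ↔ (Finsupp.weight w17 u = ![t1, t2] ∧ ¬ ∃ m ∈ SJ, m ≤ u) := by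
  obtain ⟨⟨a, b⟩, rfl⟩ := pe.surjective u
  rw [weight_pe, vec2_eq, divJ]
  simp only [FJ, Finset.mem_image]
  constructor
  · rintro ⟨p, hp, heq⟩
    rw [mem_KJ] at hp
    rw [qJ, pe_eq_iff] at heq
    obtain ⟨ha, hb⟩ := heq
    have a0 := congrFun ha 0
    have a1 := congrFun ha 1
    have a2 := congrFun ha 2
    have b0 := congrFun hb 0
    have b1 := congrFun hb 1
    have b2 := congrFun hb 2
    have b3 := congrFun hb 3
    simp at a0 a1 a2 b0 b1 b2 b3
    omega
  · rintro ⟨⟨hsa, hsb⟩, hdiv⟩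
    push_neg at hdiv
    refine ⟨(a 0, a 1, b 1, b 2), ?_, ?_⟩
    · rw [mem_KJ]; dsimp only; omega
    · rw [qJ, pe_eq_iff]
      constructor
      · funext i; fin_cases i <;> simp <;> omega
      · funext j; fin_cases j <;> simp <;> omega


variable {k : Type*} [Field k]


lemma hilbI_val (t1 t2 : ℕ) (ht2 : 2 ≤ t2) :
    hilb k w17 (Ideal.span ({X (Sum.inl 0), X (Sum.inr 0), X (Sum.inr 1) ^ 2,
      X (Sum.inl 1) * X (Sum.inr 1), X (Sum.inl 1) * X (Sum.inr 2) ^ 3} :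
      Set (MvPolynomial σ7 k))) ![t1, t2] = 3 * t1 + 2 * t2 + 1 := by
  rw [genI]
  exact (hilb_aux w17 SI ![t1, t2] (FI t1 t2) (mem_FI t1 t2 ht2)).trans (card_FI t1 t2)

lemma hilbJ_val (t1 t2 : ℕ) (ht2 : 2 ≤ t2) :
    2 * hilb k w17 (Ideal.span ({X (Sum.inr 0), X (Sum.inl 0) * X (Sum.inr 1),
      X (Sum.inl 0) * X (Sum.inr 2), X (Sum.inl 1) * X (Sum.inr 1),
      X (Sum.inl 1) * X (Sum.inr 2), X (Sum.inr 1) ^ 3, X (Sum.inr 1) ^ 2 * X (Sum.inr 2)} :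
      Set (MvPolynomial σ7 k))) ![t1, t2] = (t1 + 1) * (t1 + 2) + 2 * (2 * t2 + 1) := by
  rw [genJ]
  rw [show hilb k w17 (Ideal.span ((fun u => monomial u (1 : k)) '' SJ)) ![t1, t2]
      = (FJ t1 t2).card from hilb_aux w17 SJ ![t1, t2] (FJ t1 t2) (mem_FJ t1 t2 ht2)]
  exact card_FJ t1 t2

end Aux

/-- **Example 3.17.** In `T = Cox(P² × P³)`, the ideals
`I = (x₀, y₀, y₁², x₁y₁, x₁y₂³)` and `J = (y₀, x₀y₁, x₀y₂, x₁y₁, x₁y₂, y₁³, y₁²y₂)` have equal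
Hilbert functions at `(1,3), (2,3), (1,4), (2,4)` but `H_I(3,3) = 16 ≠ 17 = H_J(3,3)`; their
Hilbert polynomials are the distinct polynomials `3t₁ + 2t₂ + 1` and
`t₁²/2 + 3t₁/2 + 2t₂ + 2`. -/
theorem bilex_square_not_enough {k : Type*} [Field k] :
    let x : Fin 3 → MvPolynomial (Fin 3 ⊕ Fin 4) k := fun i => X (Sum.inl i)
    let y : Fin 4 → MvPolynomial (Fin 3 ⊕ Fin 4) k := fun j => X (Sum.inr j)
    let I : Ideal (MvPolynomial (Fin 3 ⊕ Fin 4) k) :=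
      Ideal.span {x 0, y 0, y 1 ^ 2, x 1 * y 1, x 1 * y 2 ^ 3}
    let J : Ideal (MvPolynomial (Fin 3 ⊕ Fin 4) k) :=
      Ideal.span {y 0, x 0 * y 1, x 0 * y 2, x 1 * y 1, x 1 * y 2, y 1 ^ 3, y 1 ^ 2 * y 2}
    (∀ t : Fin 2 → ℕ, t ∈ ({![1, 3], ![2, 3], ![1, 4], ![2, 4]} : Set (Fin 2 → ℕ)) →
        hilb k w17 I t = hilb k w17 J t) ∧
    hilb k w17 I ![3, 3] = 16 ∧
    hilb k w17 J ![3, 3] = 17 ∧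
    IsHilbPoly k w17 I (3 * X 0 + 2 * X 1 + 1) ∧
    IsHilbPoly k w17 J
      (MvPolynomial.C (1 / 2 : ℚ) * X 0 ^ 2 + MvPolynomial.C (3 / 2 : ℚ) * X 0 +
        2 * X 1 + 2) := by
  intro x y I J
  have hI : ∀ t1 t2 : ℕ, 2 ≤ t2 → hilb k w17 I ![t1, t2] = 3 * t1 + 2 * t2 + 1 :=
    fun t1 t2 h => hilbI_val t1 t2 h
  have hJ : ∀ t1 t2 : ℕ, 2 ≤ t2 →
      2 * hilb k w17 J ![t1, t2] = (t1 + 1) * (t1 + 2) + 2 * (2 * t2 + 1) :=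
    fun t1 t2 h => hilbJ_val t1 t2 h
  refine ⟨?_, ?_, ?_, ?_, ?_⟩
  · intro t ht
    simp only [Set.mem_insert_iff, Set.mem_singleton_iff] at ht
    rcases ht with rfl | rfl | rfl | rfl
    · have h1 := hI 1 3 (by norm_num); have h2 := hJ 1 3 (by norm_num); omega
    · have h1 := hI 2 3 (by norm_num); have h2 := hJ 2 3 (by norm_num); omega
    · have h1 := hI 1 4 (by norm_num); have h2 := hJ 1 4 (by norm_num); omega
    · have h1 := hI 2 4 (by norm_num); have h2 := hJ 2 4 (by norm_num); omega
  · have h1 := hI 3 3 (by norm_num); omega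
  · have h2 := hJ 3 3 (by norm_num); omega
  · refine ⟨2, fun b hb => ?_⟩
    have hb' : b = ![b 0, b 1] := by
      funext i; fin_cases i <;> rfl
    rw [hb', hI (b 0) (b 1) (hb 1)]
    push_cast
    simp only [eval_add, eval_mul, eval_X, map_one, eval_ofNat,
      Matrix.cons_val_zero, Matrix.cons_val_one, Matrix.head_cons]
  · refine ⟨2, fun b hb => ?_⟩
    have hb' : b = ![b 0, b 1] := by
      funext i; fin_cases i <;> rfl
    have h2 := hJ (b 0) (b 1) (hb 1)
    have h2q : (2 : ℚ) * (hilb k w17 J ![b 0, b 1] : ℚ)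
        = ((b 0 : ℚ) + 1) * ((b 0 : ℚ) + 2) + 2 * (2 * (b 1 : ℚ) + 1) := by
      exact_mod_cast congrArg (fun n : ℕ => (n : ℚ)) h2
    rw [hb']
    simp only [eval_add, eval_mul, eval_pow, eval_X, eval_C, eval_ofNat]
    simp only [Matrix.cons_val_zero, Matrix.cons_val_one, Matrix.head_cons]
    nlinarith [h2q]


end Gotzmann
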